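/- If the sequence (c_k) satisfies c_k ≥ c > 0 for all k, then the sequence (s_k) defined by s_{k+1}² = s_k²τ²σ⁴/(4c_k²s_k² + τ²σ⁴) with s_1 > 0 converges to 0. -/

import Mathlib

theorem stmt_4 (τ σ c₀ : ℝ) (hτ : 0 < τ) (hσ : 0 < σ) (hc₀ : 0 < c₀)
    (c s : ℕ → ℝ) (hc : ∀ k, c₀ ≤ c k)
    (hs1 : 0 < s 1) (hpos : ∀ k, 0 < s k)
    (hrec : ∀ k, (s (k + 1)) ^ 2 =
      (s k) ^ 2 * τ ^ 2 * σ ^ 4 / (4 * (c k) ^ 2 * (s k) ^ 2 + τ ^ 2 * σ ^ 4)) :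
    Filter.Tendsto s Filter.atTop (nhds 0) := by
  have hτσ : (0:ℝ) < τ ^ 2 * σ ^ 4 := by positivity
  set A : ℝ := 4 * c₀ ^ 2 / (τ ^ 2 * σ ^ 4) with hA
  have hApos : 0 < A := by positivity
  -- recurrence for the inverse squares
  have ht : ∀ k, 1 / (s (k + 1)) ^ 2 = 1 / (s k) ^ 2 + 4 * (c k) ^ 2 / (τ ^ 2 * σ ^ 4) := by
    intro k
    have hsk : (s k) ^ 2 ≠ 0 := (pow_pos (hpos k) 2).ne'
    have hden : 4 * (c k) ^ 2 * (s k) ^ 2 + τ ^ 2 * σ ^ 4 ≠ 0 := by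
      have : 0 ≤ 4 * (c k) ^ 2 * (s k) ^ 2 := by positivity
      nlinarith
    rw [hrec k]
    field_simp
    have h0 : s k ^ 2 * (s k)⁻¹ ^ 2 = 1 := by rw [← mul_pow, mul_inv_cancel₀ (hpos k).ne', one_pow]
    linear_combination (c k ^ 2 * 4) * h0
  -- linear growth of inverse squares
  have hgrow : ∀ k : ℕ, 1 / (s 0) ^ 2 + k * A ≤ 1 / (s k) ^ 2 := by
    intro k
    induction k with
    | zero => simp
    | succ n ih =>
      have hstep : A ≤ 4 * (c n) ^ 2 / (τ ^ 2 * σ ^ 4) := by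
        have h1 : c₀ ^ 2 ≤ (c n) ^ 2 := by nlinarith [hc n, hc₀]
        rw [hA]
        gcongr
      rw [ht n]
      push_cast
      nlinarith [hstep]
  -- s k ^ 2 is bounded by 1 / (1/(s 0)^2 + k * A)
  have hB : 0 < 1 / (s 0) ^ 2 := by
    have := pow_pos (hpos 0) 2; positivity
  have hbound : ∀ k : ℕ, (s k) ^ 2 ≤ 1 / (1 / (s 0) ^ 2 + k * A) := by
    intro k
    have hd : 0 < 1 / (s 0) ^ 2 + k * A := by positivity
    have hsk : 0 < (s k) ^ 2 := pow_pos (hpos k) 2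
    rw [le_div_iff₀ hd]
    have h2 : (1 / (s 0) ^ 2 + k * A) ≤ 1 / (s k) ^ 2 := hgrow k
    calc (s k) ^ 2 * (1 / (s 0) ^ 2 + k * A) ≤ (s k) ^ 2 * (1 / (s k) ^ 2) := by
          exact mul_le_mul_of_nonneg_left h2 hsk.le
      _ = 1 := by field_simp; exact div_self (hpos k).ne'
  -- the bound tends to 0
  have hlin : Filter.Tendsto (fun k : ℕ => 1 / (s 0) ^ 2 + k * A) Filter.atTop Filter.atTop := by
    apply Filter.tendsto_atTop_add_const_left
    exact Filter.Tendsto.atTop_mul_const hApos tendsto_natCast_atTop_atTop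
  have hb0 : Filter.Tendsto (fun k : ℕ => 1 / (1 / (s 0) ^ 2 + k * A)) Filter.atTop (nhds 0) := by
    simpa [Pi.inv_def] using hlin.inv_tendsto_atTop
  have hsq0 : Filter.Tendsto (fun k => (s k) ^ 2) Filter.atTop (nhds 0) := by
    exact squeeze_zero (fun k => (pow_pos (hpos k) 2).le) hbound hb0
  have hsqrt : Filter.Tendsto (fun k => Real.sqrt ((s k) ^ 2)) Filter.atTop (nhds 0) := by
    simpa [Function.comp_def] using (Real.continuous_sqrt.continuousAt.tendsto.comp hsq0)
  refine hsqrt.congr (fun k => ?_)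
  exact Real.sqrt_sq (hpos k).le
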